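/- The volume of the slab of the unit d-cube between the hyperplanes ∑ x_j = s-1 and ∑ x_j = s equals A(d, s-1)/d!, for integers 1 ≤ s ≤ d: vol({x ∈ [0,1]^d : s-1 ≤ ∑_{j=1}^d x_j ≤ s}) = A(d,s-1)/d!. -/

import Mathlib

/-- Eulerian numbers: `eulerian d s` is the number of permutations of
`{1,...,d}` with exactly `s` descents. -/
def eulerian : ℕ → ℕ → ℕ
  | 0, 0 => 1
  | 0, _ + 1 => 0
  | d + 1, 0 => eulerian d 0
  | d + 1, s + 1 => (s + 2) * eulerian d (s + 1) + (d + 1 - (s + 1)) * eulerian d s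

open MeasureTheory

noncomputable def pp (d : ℕ) (x : ℝ) : ℝ := if 0 < x then x ^ d else 0

lemma pp_nonneg (d : ℕ) (x : ℝ) : 0 ≤ pp d x := by
  unfold pp; split <;> positivity

lemma pp_of_nonpos {d : ℕ} {x : ℝ} (h : x ≤ 0) : pp d x = 0 := by
  unfold pp; rw [if_neg (not_lt.2 h)]

lemma pp_of_pos {d : ℕ} {x : ℝ} (h : 0 < x) : pp d x = x ^ d := by
  unfold pp; rw [if_pos h]

lemma pp_succ (d : ℕ) (x : ℝ) : pp (d + 1) x = x * pp d x := by
  unfold pp; split <;> ring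

lemma pp_eq_pow_of_nonneg {d : ℕ} (hd : 1 ≤ d) {x : ℝ} (h : 0 ≤ x) : pp d x = x ^ d := by
  rcases h.lt_or_eq with h | h
  · exact pp_of_pos h
  · rw [← h, pp_of_nonpos le_rfl, zero_pow (by omega)]

lemma pp_eq_max {d : ℕ} (hd : 1 ≤ d) (x : ℝ) : pp d x = (max x 0) ^ d := by
  unfold pp; split
  · rw [max_eq_left (le_of_lt ‹_›)]
  · rw [max_eq_right (not_lt.1 ‹_›), zero_pow (by omega)]

lemma pp_continuous {d : ℕ} (hd : 1 ≤ d) : Continuous (pp d) := by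
  have : pp d = fun x => (max x 0) ^ d := funext fun x => pp_eq_max hd x
  rw [this]; fun_prop

open intervalIntegral in
lemma integral_pp {d : ℕ} (hd : 1 ≤ d) {a b : ℝ} (hab : a ≤ b) :
    ∫ u in a..b, pp d u = (pp (d+1) b - pp (d+1) a) / ((d:ℝ)+1) := by
  rcases le_or_gt b 0 with hb | hb
  · rw [integral_congr (g := fun _ => 0) (fun x hx => by
      rw [Set.uIcc_of_le hab] at hx
      exact pp_of_nonpos (hx.2.trans hb))]
    rw [pp_of_nonpos hb, pp_of_nonpos (hab.trans hb)]
    simp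
  · rcases le_or_gt 0 a with ha | ha
    · rw [integral_congr (g := fun x => x ^ d) (fun x hx => by
        rw [Set.uIcc_of_le hab] at hx
        exact pp_eq_pow_of_nonneg hd (ha.trans hx.1))]
      rw [integral_pow, pp_eq_pow_of_nonneg (by omega) hb.le, pp_eq_pow_of_nonneg (by omega) ha]
    · have h1 : ∫ u in a..(0:ℝ), pp d u = 0 := by
        rw [integral_congr (g := fun _ => 0) (fun x hx => by
          rw [Set.uIcc_of_le ha.le] at hx
          exact pp_of_nonpos hx.2)]
        simp
      have h2 : ∫ u in (0:ℝ)..b, pp d u = (pp (d+1) b - pp (d+1) 0) / ((d:ℝ)+1) := by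
        rw [integral_congr (g := fun x => x ^ d) (fun x hx => by
          rw [Set.uIcc_of_le hb.le] at hx
          exact pp_eq_pow_of_nonneg hd hx.1)]
        rw [integral_pow, pp_eq_pow_of_nonneg (by omega) hb.le,
          pp_of_nonpos le_rfl, zero_pow (by omega)]
      have hint : ∀ (u v : ℝ), IntervalIntegrable (pp d) MeasureTheory.volume u v :=
        fun u v => ((pp_continuous hd).intervalIntegrable u v)
      rw [← integral_add_adjacent_intervals (hint a 0) (hint 0 b), h1, h2,
        pp_of_nonpos (le_rfl), zero_add]
      rw [pp_of_nonpos ha.le]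

noncomputable def gg (d : ℕ) (s : ℝ) : ℝ :=
  ∑ j ∈ Finset.range (d + 1), (-1 : ℝ) ^ j * (d.choose j) * pp d (s - j)

lemma gg_continuous {d : ℕ} (hd : 1 ≤ d) : Continuous (gg d) := by
  unfold gg
  refine continuous_finset_sum _ (fun j _ => ?_)
  exact Continuous.mul continuous_const ((pp_continuous hd).comp (by fun_prop))


/-- key reindexing via Pascal's rule -/
lemma reindex (d : ℕ) (s : ℝ) (P : ℝ → ℝ) :
    ∑ j ∈ Finset.range (d + 2), (-1 : ℝ) ^ j * ((d+1).choose j) * P (s - j)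
      = ∑ j ∈ Finset.range (d + 1), (-1 : ℝ) ^ j * (d.choose j) * (P (s - j) - P (s - 1 - j)) := by
  rw [Finset.sum_range_succ' (fun j => (-1 : ℝ) ^ j * ((d+1).choose j) * P (s - j)) (d+1)]
  have e1 : ∀ j ∈ Finset.range (d+1),
      (-1 : ℝ) ^ (j+1) * ((d+1).choose (j+1)) * P (s - ↑(j+1))
        = -((-1:ℝ)^j * (d.choose j) * P (s - 1 - j))
          + (-1:ℝ)^(j+1) * (d.choose (j+1)) * P (s - ↑(j+1)) := by
    intro j hj
    rw [Nat.choose_succ_succ]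
    push_cast
    simp only [Nat.succ_eq_add_one]
    ring
  rw [Finset.sum_congr rfl e1, Finset.sum_add_distrib]
  have e2 : ∑ j ∈ Finset.range (d+1), (-1:ℝ)^(j+1) * (d.choose (j+1)) * P (s - ↑(j+1))
      = ∑ j ∈ Finset.range (d+2), (-1:ℝ)^j * (d.choose j) * P (s - j)
        - (-1:ℝ)^0 * (d.choose 0) * P (s - 0) := by
    rw [Finset.sum_range_succ' (fun j => (-1 : ℝ) ^ j * (d.choose j) * P (s - j)) (d+1)]
    push_cast
    ring
  rw [e2, Finset.sum_range_succ (fun j => (-1 : ℝ) ^ j * (d.choose j) * P (s - j)) (d+1),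
    Nat.choose_succ_self]
  simp only [mul_sub, Finset.sum_sub_distrib, Finset.sum_neg_distrib, Nat.choose_zero_right]
  push_cast
  ring

lemma choose_id (d j : ℕ) (K : ℝ) :
    (K - ((j:ℝ)+1)) * (((d+2).choose (j+1) : ℕ) : ℝ)
      = K * (((d+1).choose (j+1) : ℕ) : ℝ) - ((d:ℝ) + 2 - K) * (((d+1).choose j : ℕ) : ℝ) := by
  have h1 : ((j:ℝ)+1) * ((d+2).choose (j+1) : ℕ) = ((d:ℝ)+2) * ((d+1).choose j : ℕ) := by
    have := Nat.add_one_mul_choose_eq (d+1) j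
    have := congrArg (Nat.cast (R := ℝ)) this
    push_cast at this
    linarith
  have h2 : (((d+2).choose (j+1) : ℕ) : ℝ)
      = ((d+1).choose j : ℕ) + (((d+1).choose (j+1) : ℕ) : ℝ) := by
    exact_mod_cast Nat.choose_succ_succ (d+1) j
  linear_combination K * h2 - h1

lemma formula_rec (d : ℕ) (K : ℝ) :
    ∑ j ∈ Finset.range (d + 3), (-1:ℝ)^j * ((d+2).choose j) * pp (d+1) (K - j)
      = K * ∑ j ∈ Finset.range (d + 2), (-1:ℝ)^j * ((d+1).choose j) * pp d (K - j)
        + ((d:ℝ) + 2 - K) * ∑ j ∈ Finset.range (d + 2), (-1:ℝ)^j * ((d+1).choose j) * pp d (K - 1 - j) := by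
  rw [Finset.sum_range_succ' (fun j => (-1:ℝ)^j * ((d+2).choose j) * pp (d+1) (K - j)) (d+2)]
  have e1 : ∀ j ∈ Finset.range (d+2),
      (-1:ℝ)^(j+1) * ((d+2).choose (j+1)) * pp (d+1) (K - ↑(j+1))
        = K * ((-1:ℝ)^(j+1) * ((d+1).choose (j+1)) * pp d (K - ↑(j+1)))
          + ((d:ℝ)+2-K) * ((-1:ℝ)^j * ((d+1).choose j) * pp d (K - 1 - j)) := by
    intro j hj
    have hppa : pp (d+1) (K - ↑(j+1)) = (K - ((j:ℝ)+1)) * pp d (K - ↑(j+1)) := by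
      push_cast [pp_succ]; ring_nf
    rw [hppa]
    have := choose_id d j K
    have harg : (K - 1 - (j:ℝ)) = K - ↑(j+1) := by push_cast; ring
    rw [harg]
    push_cast
    push_cast at this
    linear_combination ((-1:ℝ)^(j+1) * pp d (K - ((j:ℝ)+1))) * this
  rw [Finset.sum_congr rfl e1, Finset.sum_add_distrib, ← Finset.mul_sum, ← Finset.mul_sum]
  have e2 : ∑ j ∈ Finset.range (d+2), (-1:ℝ)^(j+1) * (((d+1).choose (j+1) : ℕ) : ℝ) * pp d (K - ↑(j+1))
      = ∑ j ∈ Finset.range (d+2), (-1:ℝ)^j * ((d+1).choose j) * pp d (K - j) - pp d K := by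
    have h3 := Finset.sum_range_succ' (fun j => (-1:ℝ)^j * ((d+1).choose j) * pp d (K - j)) (d+2)
    rw [Finset.sum_range_succ (fun j => (-1:ℝ)^j * ((d+1).choose j) * pp d (K - j)) (d+2),
      Nat.choose_succ_self] at h3
    push_cast at h3 ⊢
    norm_num at h3
    linarith
  simp only [pow_zero, Nat.choose_zero_right, Nat.cast_one, one_mul, Nat.cast_zero, sub_zero,
    Nat.cast_ofNat, pp_succ]
  rw [e2]
  ring

lemma eulerian_zero (d : ℕ) : eulerian d 0 = 1 := by
  induction d with
  | zero => rfl
  | succ d ih => rw [eulerian]; exact ih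

lemma eulerian_eq_zero : ∀ {d k : ℕ}, 1 ≤ d → d ≤ k → eulerian d k = 0 := by
  intro d
  induction d with
  | zero => omega
  | succ d ih =>
    intro k h1 h2
    match k, h2 with
    | k+1, _ =>
      rw [eulerian]
      rcases Nat.eq_zero_or_pos d with rfl | hd
      · have h4 : eulerian 0 (k+1) = 0 := rfl
        have h5 : 0 + 1 - (k+1) = 0 := by omega
        rw [h4, h5]; ring
      · have h3 : eulerian d (k+1) = 0 := ih hd (by omega)
        rcases Nat.lt_or_ge d k with h | h
        · rw [h3, ih hd (by omega)]; ring
        · have hdk : d = k := by omega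
          subst hdk
          rw [h3]; simp

lemma eulerian_formula : ∀ d : ℕ, 1 ≤ d → ∀ k : ℕ, (eulerian d k : ℝ)
    = ∑ j ∈ Finset.range (d + 2), (-1:ℝ)^j * ((d+1).choose j) * pp d ((k:ℝ) + 1 - j) := by
  intro d hd
  induction d, hd using Nat.le_induction with
  | base =>
    intro k
    rw [show (1:ℕ)+2 = 3 from rfl, Finset.sum_range_succ, Finset.sum_range_succ,
      Finset.sum_range_one]
    match k with
    | 0 =>
      have : eulerian 1 0 = 1 := rfl
      rw [this]
      norm_num [pp]
    | 1 =>
      have : eulerian 1 1 = 0 := eulerian_eq_zero le_rfl le_rfl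
      rw [this]
      norm_num [pp]
    | (k+2) =>
      have h0 : eulerian 1 (k+2) = 0 := eulerian_eq_zero le_rfl (by omega)
      rw [h0]
      push_cast
      norm_num
      rw [pp_of_pos (show (0:ℝ) < ↑k + 2 + 1 by positivity),
        pp_of_pos (show (0:ℝ) < ↑k + 2 by positivity),
        pp_of_pos (show (0:ℝ) < ↑k + 2 + 1 - 2 by linarith [Nat.cast_nonneg (α := ℝ) k])]
      simp [pow_one]
      ring
  | succ d hd ih =>
    intro k
    match k with
    | 0 =>
      have h0 : eulerian (d+1) 0 = 1 := eulerian_zero _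
      rw [h0]
      rw [Finset.sum_eq_single_of_mem 0 (Finset.mem_range.2 (by omega))]
      · rw [pp_of_pos (by norm_num : (0:ℝ) < (0:ℕ) + 1 - (0:ℕ))]
        norm_num
      · intro j hj hj0
        rw [pp_of_nonpos (by
          have : (1:ℝ) ≤ j := by exact_mod_cast Nat.one_le_iff_ne_zero.2 hj0
          push_cast; linarith)]
        ring
    | (s+1) =>
      have hrec : (eulerian (d+1) (s+1) : ℝ)
          = ((s:ℝ)+2) * eulerian d (s+1) + ((d:ℝ) - s) * eulerian d s := by
        rw [eulerian]
        rcases le_or_gt s d with h | h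
        · have : ((d + 1 - (s+1) : ℕ) : ℝ) = (d:ℝ) - s := by
            rw [Nat.cast_sub (by omega)]; push_cast; ring
          push_cast [← this]
          ring
        · have h4 : eulerian d s = 0 := eulerian_eq_zero hd (by omega)
          have h5 : d + 1 - (s+1) = 0 := by omega
          rw [h4, h5]
          push_cast
          ring
      rw [hrec, ih (s+1), ih s]
      have hfr := formula_rec d ((s:ℝ)+2)
      have c1 : ∀ j : ℕ, ((s:ℝ)+2) - 1 - (j:ℝ) = (s:ℝ) + 1 - j := by intro j; ring
      have c2 : ((d:ℝ) + 2 - ((s:ℝ)+2)) = (d:ℝ) - s := by ring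
      rw [c2] at hfr
      calc ((s:ℝ)+2) * ∑ j ∈ Finset.range (d + 2), (-1:ℝ)^j * ((d+1).choose j) * pp d ((↑(s+1):ℝ) + 1 - j)
            + ((d:ℝ) - s) * ∑ j ∈ Finset.range (d + 2), (-1:ℝ)^j * ((d+1).choose j) * pp d ((s:ℝ) + 1 - j)
          = ((s:ℝ)+2) * ∑ j ∈ Finset.range (d + 2), (-1:ℝ)^j * ((d+1).choose j) * pp d (((s:ℝ)+2) - j)
            + ((d:ℝ) - s) * ∑ j ∈ Finset.range (d + 2), (-1:ℝ)^j * ((d+1).choose j) * pp d (((s:ℝ)+2) - 1 - j) := by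
            congr 2 <;> (apply Finset.sum_congr rfl; intro j hj; congr 1; push_cast; ring_nf)
        _ = ∑ j ∈ Finset.range (d + 3), (-1:ℝ)^j * ((d+2).choose j) * pp (d+1) (((s:ℝ)+2) - j) := hfr.symm
        _ = ∑ j ∈ Finset.range (d + 1 + 2), (-1:ℝ)^j * ((d+1+1).choose j) * pp (d+1) ((↑(s+1):ℝ) + 1 - j) := by
            apply Finset.sum_congr rfl; intro j hj; congr 1; push_cast; ring_nf

lemma gg_integral {d : ℕ} (hd : 1 ≤ d) (s : ℝ) :
    ∫ t in (0:ℝ)..1, gg d (s - t) = gg (d+1) s / ((d:ℝ)+1) := by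
  have h1 : ∀ t:ℝ, gg d (s - t)
      = ∑ j ∈ Finset.range (d+1), (-1:ℝ)^j * (d.choose j) * pp d ((s - j) - t) := by
    intro t; unfold gg; refine Finset.sum_congr rfl (fun j hj => ?_); congr 1; ring
  simp only [h1]
  have hcont : ∀ j : ℕ, Continuous fun t : ℝ => (-1:ℝ)^j * (d.choose j) * pp d ((s - j) - t) :=
    fun j => continuous_const.mul ((pp_continuous hd).comp (by fun_prop))
  rw [intervalIntegral.integral_finset_sum (fun j _ => (hcont j).intervalIntegrable _ _)]
  have h2 : ∀ j ∈ Finset.range (d+1),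
      ∫ t in (0:ℝ)..1, (-1:ℝ)^j * (d.choose j) * pp d ((s - j) - t)
        = (-1:ℝ)^j * (d.choose j) * ((pp (d+1) (s - j) - pp (d+1) (s - 1 - j)) / ((d:ℝ)+1)) := by
    intro j hj
    rw [intervalIntegral.integral_const_mul, intervalIntegral.integral_comp_sub_left (pp d) (s - j)]
    rw [integral_pp hd (by linarith)]
    have harg : s - ↑j - 1 = s - 1 - ↑j := by ring
    rw [sub_zero, harg]
  rw [Finset.sum_congr rfl h2]
  have h4 := reindex d s (pp (d+1))
  unfold gg
  rw [h4, Finset.sum_div]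
  refine Finset.sum_congr rfl (fun j hj => ?_)
  ring

lemma gg_nonneg : ∀ d, 1 ≤ d → ∀ s, 0 ≤ gg d s := by
  intro d hd
  induction d, hd using Nat.le_induction with
  | base =>
    intro s
    unfold gg
    rw [Finset.sum_range_succ, Finset.sum_range_one]
    norm_num
    rcases le_or_gt (s-1) 0 with h | h
    · rw [pp_of_nonpos h]
      simpa using pp_nonneg 1 s
    · rw [pp_of_pos h, pp_of_pos (by linarith : (0:ℝ) < s)]
      simp only [pow_one]
      linarith
  | succ d hd ih =>
    intro s
    have h0 : 0 ≤ ∫ t in (0:ℝ)..1, gg d (s - t) :=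
      intervalIntegral.integral_nonneg (by norm_num) (fun t _ => ih _)
    have h1 : gg (d+1) s = ((d:ℝ)+1) * ∫ t in (0:ℝ)..1, gg d (s - t) := by
      rw [gg_integral hd s]
      field_simp
    rw [h1]
    exact mul_nonneg (by positivity) h0

open MeasureTheory

lemma volume_A : ∀ d, 1 ≤ d → ∀ s : ℝ,
    volume {x : Fin d → ℝ | (∀ j, x j ∈ Set.Icc (0:ℝ) 1) ∧ ∑ j, x j ≤ s}
      = ENNReal.ofReal (gg d s / d.factorial) := by
  intro d hd
  induction d, hd using Nat.le_induction with
  | base =>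
    intro s
    have he := (volume_preserving_funUnique (Fin 1) ℝ)
    have hset : {x : Fin 1 → ℝ | (∀ j, x j ∈ Set.Icc (0:ℝ) 1) ∧ ∑ j, x j ≤ s}
        = (MeasurableEquiv.funUnique (Fin 1) ℝ) ⁻¹' (Set.Icc 0 (min 1 s)) := by
      ext x
      simp [MeasurableEquiv.funUnique, Fin.forall_fin_one, Set.mem_Icc, le_min_iff]
      tauto
    rw [hset]
    erw [he.measure_preimage (measurableSet_Icc (a := (0:ℝ)) (b := min 1 s)).nullMeasurableSet]
    rw [Real.volume_Icc]
    unfold gg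
    rw [Finset.sum_range_succ, Finset.sum_range_one]
    norm_num
    rcases le_or_gt s 0 with h | h
    · rw [pp_of_nonpos h, pp_of_nonpos (by linarith : s - 1 ≤ 0)]
      rw [min_eq_right (ENNReal.ofReal_le_one.2 (by linarith))]
      rw [ENNReal.ofReal_of_nonpos h]
      simp
    · rcases le_or_gt s 1 with h1 | h1
      · rw [pp_of_pos h, pp_of_nonpos (by linarith : s - 1 ≤ 0)]
        rw [min_eq_right (ENNReal.ofReal_le_one.2 h1)]
        norm_num
      · rw [pp_of_pos h, pp_of_pos (by linarith : (0:ℝ) < s - 1)]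
        rw [min_eq_left (ENNReal.one_le_ofReal.2 (by linarith))]
        norm_num
  | succ d hd ih =>
    intro s
    have hψ := volume_preserving_piFinSuccAbove (fun _ : Fin (d+1) => ℝ) 0
    set E : Set (ℝ × (Fin d → ℝ)) :=
      {p | p.1 ∈ Set.Icc (0:ℝ) 1 ∧ (∀ j, p.2 j ∈ Set.Icc (0:ℝ) 1) ∧ p.1 + ∑ j, p.2 j ≤ s} with hEdef
    have hE : MeasurableSet E := by
      have h1 : MeasurableSet {p : ℝ × (Fin d → ℝ) | p.1 ∈ Set.Icc (0:ℝ) 1} :=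
        measurable_fst measurableSet_Icc
      have h2 : MeasurableSet {p : ℝ × (Fin d → ℝ) | ∀ j, p.2 j ∈ Set.Icc (0:ℝ) 1} := by
        rw [Set.setOf_forall]
        exact MeasurableSet.iInter fun j =>
          ((measurable_pi_apply j).comp measurable_snd) measurableSet_Icc
      have h3 : MeasurableSet {p : ℝ × (Fin d → ℝ) | p.1 + ∑ j, p.2 j ≤ s} :=
        measurableSet_le (measurable_fst.add
          (Finset.measurable_sum _ fun j _ => (measurable_pi_apply j).comp measurable_snd))
          measurable_const
      exact h1.inter (h2.inter h3)
    have hset : {x : Fin (d+1) → ℝ | (∀ j, x j ∈ Set.Icc (0:ℝ) 1) ∧ ∑ j, x j ≤ s}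
        = (MeasurableEquiv.piFinSuccAbove (fun _ : Fin (d+1) => ℝ) 0) ⁻¹' E := by
      ext x
      simp only [Set.mem_preimage, hEdef, Set.mem_setOf_eq,
        MeasurableEquiv.piFinSuccAbove_apply, Fin.removeNth, Fin.zero_succAbove,
        Fin.forall_fin_succ, Fin.sum_univ_succ]
      tauto
    rw [hset, hψ.measure_preimage hE.nullMeasurableSet, Measure.volume_eq_prod,
      Measure.prod_apply hE]
    have hslice : ∀ t : ℝ, volume (Prod.mk t ⁻¹' E)
        = Set.indicator (Set.Icc (0:ℝ) 1)
            (fun t => ENNReal.ofReal (gg d (s - t) / d.factorial)) t := by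
      intro t
      rcases em (t ∈ Set.Icc (0:ℝ) 1) with ht | ht
      · rw [Set.indicator_of_mem ht]
        have hpre : Prod.mk t ⁻¹' E
            = {y : Fin d → ℝ | (∀ j, y j ∈ Set.Icc (0:ℝ) 1) ∧ ∑ j, y j ≤ s - t} := by
          ext y
          simp only [hEdef, Set.mem_preimage, Set.mem_setOf_eq]
          constructor
          · rintro ⟨_, h2, h3⟩; exact ⟨h2, by linarith⟩
          · rintro ⟨h2, h3⟩; exact ⟨ht, h2, by linarith⟩
        rw [hpre, ih (s - t)]
      · rw [Set.indicator_of_notMem ht]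
        have hpre : Prod.mk t ⁻¹' E = ∅ := by
          ext y
          simp only [hEdef, Set.mem_preimage, Set.mem_setOf_eq, Set.mem_empty_iff_false,
            iff_false]
          rintro ⟨h1, _, _⟩
          exact ht h1
        rw [hpre]; simp
    rw [lintegral_congr hslice, lintegral_indicator measurableSet_Icc]
    have hInt : IntegrableOn (fun t => gg d (s - t) / d.factorial) (Set.Icc (0:ℝ) 1) := by
      apply Continuous.integrableOn_Icc
      exact ((gg_continuous hd).comp (continuous_const.sub continuous_id)).div_const _
    have hnn : 0 ≤ᵐ[volume.restrict (Set.Icc (0:ℝ) 1)] fun t => gg d (s - t) / d.factorial :=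
      Filter.Eventually.of_forall fun t => div_nonneg (gg_nonneg d hd _) (by positivity)
    rw [← ofReal_integral_eq_lintegral_ofReal hInt hnn]
    have hIoc : ∫ t in Set.Icc (0:ℝ) 1, gg d (s - t) / d.factorial
        = ∫ t in (0:ℝ)..1, gg d (s - t) / d.factorial := by
      rw [intervalIntegral.integral_of_le (by norm_num : (0:ℝ) ≤ 1),
        integral_Icc_eq_integral_Ioc]
    rw [hIoc, intervalIntegral.integral_div, gg_integral hd]
    congr 1
    rw [Nat.factorial_succ]
    push_cast
    field_simp

lemma hyperplane_null (d : ℕ) (hd : 1 ≤ d) (c : ℝ) :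
    volume {x : Fin d → ℝ | ∑ j, x j = c} = 0 := by
  classical
  set f : (Fin d → ℝ) →ₗ[ℝ] ℝ :=
    { toFun := fun x => ∑ j, x j
      map_add' := fun x y => by simp [Finset.sum_add_distrib]
      map_smul' := fun r x => by simp [Finset.mul_sum] } with hf
  have hker : f ≠ 0 := by
    intro h
    have h1 : f (fun _ => (1:ℝ)) = 0 := by rw [h]; rfl
    have h2 : f (fun _ => (1:ℝ)) = (d:ℝ) := by simp [hf]
    rw [h2] at h1
    have : d = 0 := by exact_mod_cast h1
    omega
  have hkt : LinearMap.ker f ≠ ⊤ := fun h => hker (LinearMap.ker_eq_top.mp h)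
  have h0 : volume ((LinearMap.ker f : Submodule ℝ (Fin d → ℝ)) : Set (Fin d → ℝ)) = 0 :=
    Measure.addHaar_submodule volume _ hkt
  set x₀ : Fin d → ℝ := fun _ => c / d with hx₀
  have hsum0 : ∑ j, x₀ j = c := by
    rw [hx₀]
    rw [Finset.sum_const, Finset.card_univ, Fintype.card_fin, nsmul_eq_mul]
    field_simp
  have hset : {x : Fin d → ℝ | ∑ j, x j = c}
      = (fun x => x + (-x₀)) ⁻¹' ((LinearMap.ker f : Submodule ℝ (Fin d → ℝ)) : Set _) := by
    ext x
    simp only [Set.mem_setOf_eq, Set.mem_preimage, SetLike.mem_coe, LinearMap.mem_ker, hf,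
      LinearMap.coe_mk, AddHom.coe_mk]
    rw [show (∑ j, (x + (-x₀)) j) = (∑ j, x j) - (∑ j, x₀ j) by
      simp [Finset.sum_add_distrib, Finset.sum_neg_distrib, sub_eq_add_neg]]
    rw [hsum0]
    constructor <;> intro h <;> linarith
  rw [hset, measure_preimage_add_right, h0]


/-- The volume of the slab of the unit cube between the hyperplanes
`∑ x_j = s - 1` and `∑ x_j = s` is `A(d, s-1)/d!`. -/
theorem stmt18 (d s : ℕ) (hs : 1 ≤ s) (hsd : s ≤ d) :
    volume {x : Fin d → ℝ |
        (∀ j, x j ∈ Set.Icc (0 : ℝ) 1) ∧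
        (s : ℝ) - 1 ≤ ∑ j, x j ∧ ∑ j, x j ≤ (s : ℝ)} =
      ENNReal.ofReal ((eulerian d (s - 1) : ℝ) / (Nat.factorial d : ℝ)) := by
  have hd : 1 ≤ d := le_trans hs hsd
  set A := fun r : ℝ => {x : Fin d → ℝ | (∀ j, x j ∈ Set.Icc (0:ℝ) 1) ∧ ∑ j, x j ≤ r} with hA
  set C := {x : Fin d → ℝ | (∀ j, x j ∈ Set.Icc (0:ℝ) 1) ∧ ∑ j, x j < (s:ℝ) - 1} with hC
  have hCmeas : MeasurableSet C := by
    have h2 : MeasurableSet {x : Fin d → ℝ | ∀ j, x j ∈ Set.Icc (0:ℝ) 1} := by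
      rw [Set.setOf_forall]
      exact MeasurableSet.iInter fun j => (measurable_pi_apply j) measurableSet_Icc
    have h3 : MeasurableSet {x : Fin d → ℝ | ∑ j, x j < (s:ℝ) - 1} :=
      measurableSet_lt (Finset.measurable_sum _ fun j _ => measurable_pi_apply j)
        measurable_const
    exact h2.inter h3
  have hslab : {x : Fin d → ℝ |
        (∀ j, x j ∈ Set.Icc (0 : ℝ) 1) ∧
        (s : ℝ) - 1 ≤ ∑ j, x j ∧ ∑ j, x j ≤ (s : ℝ)} = A (s:ℝ) \ C := by
    ext x
    simp only [hA, hC, Set.mem_setOf_eq, Set.mem_diff]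
    constructor
    · rintro ⟨h1, h2, h3⟩
      exact ⟨⟨h1, h3⟩, fun h => absurd h.2 (not_lt.2 h2)⟩
    · rintro ⟨⟨h1, h3⟩, h4⟩
      refine ⟨h1, ?_, h3⟩
      by_contra h5
      exact h4 ⟨h1, by linarith⟩
  have hCA1 : C ⊆ A ((s:ℝ) - 1) := fun x hx => ⟨hx.1, le_of_lt hx.2⟩
  have hA1C : A ((s:ℝ) - 1) ⊆ C ∪ {x : Fin d → ℝ | ∑ j, x j = (s:ℝ) - 1} := by
    intro x hx
    rcases lt_or_eq_of_le hx.2 with h | h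
    · exact Or.inl ⟨hx.1, h⟩
    · exact Or.inr h
  have hCvol : volume C = ENNReal.ofReal (gg d ((s:ℝ) - 1) / d.factorial) := by
    apply le_antisymm
    · rw [← volume_A d hd]
      exact measure_mono hCA1
    · rw [← volume_A d hd]
      calc volume (A ((s:ℝ) - 1))
          ≤ volume C + volume {x : Fin d → ℝ | ∑ j, x j = (s:ℝ) - 1} :=
            (measure_mono hA1C).trans (measure_union_le _ _)
        _ = volume C := by rw [hyperplane_null d hd]; exact add_zero _
  have hCsub : C ⊆ A (s:ℝ) := fun x hx => ⟨hx.1, by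
    have := hx.2
    linarith⟩
  have hdiff : volume (A (s:ℝ) \ C) = volume (A (s:ℝ)) - volume C :=
    measure_diff hCsub hCmeas.nullMeasurableSet (by rw [hCvol]; exact ENNReal.ofReal_ne_top)
  have key : (eulerian d (s-1) : ℝ) = gg d (s:ℝ) - gg d ((s:ℝ) - 1) := by
    rw [eulerian_formula d hd (s-1)]
    have hc : ((s-1 : ℕ) : ℝ) + 1 = (s:ℝ) := by
      rw [Nat.cast_sub hs]; push_cast; ring
    have h1 : ∀ j ∈ Finset.range (d+2),
        (-1:ℝ)^j * ((d+1).choose j) * pp d (((s-1:ℕ):ℝ) + 1 - j)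
          = (-1:ℝ)^j * ((d+1).choose j) * pp d ((s:ℝ) - j) := by
      intro j _; rw [hc]
    rw [Finset.sum_congr rfl h1, reindex d (s:ℝ) (pp d)]
    unfold gg
    rw [← Finset.sum_sub_distrib]
    exact Finset.sum_congr rfl fun j _ => by ring
  rw [hslab, hdiff, volume_A d hd, hCvol,
    ← ENNReal.ofReal_sub _ (div_nonneg (gg_nonneg d hd _) (by positivity))]
  congr 1
  rw [div_sub_div_same, key]
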